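/- For a tropical matrix A ∈ T^{n×n}, the maximal cycle mean ρ(A) = max over simple circuits (i_1,…,i_j,i_1) in the graph of A of (A_{i_1 i_2} + ⋯ + A_{i_j i_1})/j is the maximal tropical eigenvalue of A: there exists a vector u ∈ T^n \ {(-∞,…,-∞)} with A⊙u = ρ(A)⊙u whenever ρ(A) ≠ -∞, and every tropical eigenvalue λ of A satisfies λ ≤ ρ(A). -/

import Mathlib

/-- The max-plus (tropical) semiring `T = ℝ ∪ {-∞}`. -/
abbrev T : Type := WithBot ℝ

/-- Tropical matrix product. -/
noncomputable def tmul {n m k : ℕ} (A : Fin n → Fin m → T) (B : Fin m → Fin k → T) :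
    Fin n → Fin k → T :=
  fun i j => Finset.univ.sup fun l => A i l + B l j

/-- Tropical matrix-vector product. -/
noncomputable def tmulVec {n m : ℕ} (A : Fin n → Fin m → T) (u : Fin m → T) : Fin n → T :=
  fun i => Finset.univ.sup fun j => A i j + u j

/-- Tropical identity matrix. -/
noncomputable def tId (n : ℕ) : Fin n → Fin n → T :=
  fun i j => if i = j then (0 : T) else ⊥

/-- Tropical matrix powers. -/
noncomputable def tpow {n : ℕ} (A : Fin n → Fin n → T) : ℕ → (Fin n → Fin n → T)
  | 0 => tId n
  | (m + 1) => tmul (tpow A m) A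

/-- Tropical product of a list of matrices (empty product = identity). -/
noncomputable def tProd {n : ℕ} : List (Fin n → Fin n → T) → (Fin n → Fin n → T)
  | [] => tId n
  | (M :: L) => tmul M (tProd L)

/-- Weight of a permutation. -/
noncomputable def wt {n : ℕ} (A : Fin n → Fin n → T) (σ : Equiv.Perm (Fin n)) : T :=
  ∑ i, A i (σ i)

/-- Tropical permanent. -/
noncomputable def per {n : ℕ} (A : Fin n → Fin n → T) : T :=
  Finset.univ.sup fun σ : Equiv.Perm (Fin n) => wt A σ

/-- Tropical non-singularity: finite permanent attained by a unique permutation. -/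
def NonSingular {n : ℕ} (A : Fin n → Fin n → T) : Prop :=
  per A ≠ ⊥ ∧ ∃! σ : Equiv.Perm (Fin n), wt A σ = per A

/-- Weight of the circuit `c 0 → c 1 → ⋯ → c ℓ → c 0` (length `ℓ+1`). -/
noncomputable def cwt {n ℓ : ℕ} (A : Fin n → Fin n → T) (c : Fin (ℓ + 1) → Fin n) : T :=
  ∑ k : Fin (ℓ + 1), A (c k) (c (k + 1))

/-- `ρ(A) = r`: some circuit has mean weight `r`, and every circuit has mean weight `≤ r`. -/
def RhoEq {n : ℕ} (A : Fin n → Fin n → T) (r : ℝ) : Prop :=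
  (∃ ℓ, ∃ c : Fin (ℓ + 1) → Fin n, cwt A c = ((((ℓ : ℝ) + 1) * r : ℝ) : T)) ∧
  ∀ ℓ, ∀ c : Fin (ℓ + 1) → Fin n, cwt A c ≤ ((((ℓ : ℝ) + 1) * r : ℝ) : T)

/-- `(i,j)` is an arc of the critical graph (lies on a circuit of mean weight `r = ρ(A)`). -/
def CritArc {n : ℕ} (A : Fin n → Fin n → T) (r : ℝ) (i j : Fin n) : Prop :=
  ∃ ℓ, ∃ c : Fin (ℓ + 1) → Fin n, cwt A c = ((((ℓ : ℝ) + 1) * r : ℝ) : T) ∧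
    ∃ k : Fin (ℓ + 1), c k = i ∧ c (k + 1) = j

/-- `i` is a node of the critical graph. -/
def CritNode {n : ℕ} (A : Fin n → Fin n → T) (r : ℝ) (i : Fin n) : Prop :=
  ∃ ℓ, ∃ c : Fin (ℓ + 1) → Fin n, cwt A c = ((((ℓ : ℝ) + 1) * r : ℝ) : T) ∧
    ∃ k : Fin (ℓ + 1), c k = i

/-- Reachability in the critical graph. -/
def CritReach {n : ℕ} (A : Fin n → Fin n → T) (r : ℝ) : Fin n → Fin n → Prop :=
  Relation.ReflTransGen (fun i j => CritArc A r i j)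

/-- Same strongly connected component of the critical graph. -/
def SameScc {n : ℕ} (A : Fin n → Fin n → T) (r : ℝ) (i j : Fin n) : Prop :=
  CritReach A r i j ∧ CritReach A r j i

/-- `R` is a set of representatives, one per scc of the critical graph. -/
def SccReps {n : ℕ} (A : Fin n → Fin n → T) (r : ℝ) (R : Finset (Fin n)) : Prop :=
  (∀ i ∈ R, CritNode A r i) ∧
  (∀ i ∈ R, ∀ j ∈ R, i ≠ j → ¬ SameScc A r i j) ∧
  (∀ j, CritNode A r j → ∃ i ∈ R, SameScc A r i j)

/-- Cyclicity of the scc of the critical graph containing `i`: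
the gcd (greatest common divisor) of the lengths of the critical circuits through `i`. -/
noncomputable def cycAt {n : ℕ} (A : Fin n → Fin n → T) (r : ℝ) (i : Fin n) : ℕ :=
  sSup {d : ℕ | ∀ ℓ : ℕ,
    (∃ c : Fin (ℓ + 1) → Fin n, cwt A c = ((((ℓ : ℝ) + 1) * r : ℝ) : T) ∧ c 0 = i) →
    d ∣ (ℓ + 1)}

/-- `A` has an `r × r` tropically non-singular submatrix. -/
def HasNSsub {n m : ℕ} (A : Fin n → Fin m → T) (r : ℕ) : Prop :=
  ∃ f : Fin r → Fin n, ∃ g : Fin r → Fin m,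
    Function.Injective f ∧ Function.Injective g ∧
    NonSingular (fun i j => A (f i) (g j))

/-- Tropical rank: maximal size of a tropically non-singular square submatrix. -/
noncomputable def trrk {n m : ℕ} (A : Fin n → Fin m → T) : ℕ :=
  sSup {r : ℕ | HasNSsub A r}

/-- Tropical convex hull (span) of a finite family of vectors of `T^n`. -/
def tSpan {n m : ℕ} (v : Fin m → (Fin n → T)) : Set (Fin n → T) :=
  { w | ∃ α : Fin m → T, w = fun i => Finset.univ.sup fun j => α j + v j i }

/-- Weak dimension of a tropically convex set: minimal size of a generating family. -/
noncomputable def weakDim {n : ℕ} (X : Set (Fin n → T)) : ℕ :=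
  sInf {k : ℕ | ∃ v : Fin k → (Fin n → T), tSpan v = X}

/-- Column rank: weak dimension of the tropical convex hull of the columns. -/
noncomputable def colrk {n m : ℕ} (A : Fin n → Fin m → T) : ℕ :=
  weakDim (tSpan fun j => fun i => A i j)

/-- Row rank: weak dimension of the tropical convex hull of the rows. -/
noncomputable def rowrk {n m : ℕ} (A : Fin n → Fin m → T) : ℕ :=
  weakDim (tSpan fun i => fun j => A i j)

namespace TropAux

/-- distribute a constant over a finite sup in `T` -/
lemma const_add_sup {ι : Type*} (s : Finset ι) (f : ι → T) (c : T) :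
    c + s.sup f = s.sup fun j => c + f j := by
  have := Finset.comp_sup_eq_sup_comp (s := s) (f := f) (c + ·)
    (fun x y => Monotone.map_max (fun a b hab => add_le_add_right hab c)) (by simp)
  simpa [Function.comp_def] using this

/-- walk weight: first `m` steps of `v` -/
noncomputable def wwt {n : ℕ} (B : Fin n → Fin n → T) (m : ℕ) (v : ℕ → Fin n) : T :=
  ∑ k ∈ Finset.range m, B (v k) (v (k + 1))

lemma wwt_succ_left {n : ℕ} (B : Fin n → Fin n → T) (m : ℕ) (v : ℕ → Fin n) :
    wwt B (m + 1) v = B (v 0) (v 1) + wwt B m (fun k => v (k + 1)) := by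
  rw [wwt, Finset.sum_range_succ' (fun k => B (v k) (v (k+1))) m, add_comm]
  rfl

lemma wwt_add {n : ℕ} (B : Fin n → Fin n → T) (a b : ℕ) (v : ℕ → Fin n) :
    wwt B (a + b) v = wwt B a v + wwt B b (fun k => v (a + k)) := by
  induction b with
  | zero => simp [wwt]
  | succ b ih =>
    rw [show a + (b+1) = (a+b)+1 from rfl, wwt, Finset.sum_range_succ, ← wwt, ih,
      show wwt B (b+1) (fun k => v (a+k)) = wwt B b (fun k => v (a+k)) + B (v (a+b)) (v (a+(b+1))) from Finset.sum_range_succ _ b, add_assoc]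
    rfl

/-- dynamic programming table: best walk of length m from i to j0 -/
noncomputable def Pw {n : ℕ} (B : Fin n → Fin n → T) (j0 : Fin n) : ℕ → Fin n → T
  | 0 => fun i => if i = j0 then 0 else ⊥
  | (m+1) => fun i => Finset.univ.sup fun j => B i j + Pw B j0 m j

noncomputable def uvec {n : ℕ} (B : Fin n → Fin n → T) (j0 : Fin n) : Fin n → T :=
  fun i => (Finset.range n).sup fun m => Pw B j0 (m + 1) i

lemma wwt_le_P {n : ℕ} (B : Fin n → Fin n → T) (j0 : Fin n) :
    ∀ (m : ℕ) (v : ℕ → Fin n), v m = j0 → wwt B m v ≤ Pw B j0 m (v 0) := by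
  intro m
  induction m with
  | zero => intro v hv; simp [wwt, Pw, hv]
  | succ m ih =>
    intro v hv
    rw [wwt_succ_left]
    calc B (v 0) (v 1) + wwt B m (fun k => v (k+1))
        ≤ B (v 0) (v 1) + Pw B j0 m (v 1) := add_le_add_right (ih _ hv) _
      _ ≤ Pw B j0 (m+1) (v 0) :=
          Finset.le_sup (f := fun j => B (v 0) j + Pw B j0 m j) (Finset.mem_univ (v 1))

lemma P_attained {n : ℕ} (hn : 0 < n) (B : Fin n → Fin n → T) (j0 : Fin n) :
    ∀ (m : ℕ) (i : Fin n), Pw B j0 m i ≠ ⊥ →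
      ∃ v : ℕ → Fin n, v 0 = i ∧ v m = j0 ∧ wwt B m v = Pw B j0 m i := by
  intro m
  induction m with
  | zero =>
    intro i hi
    have : i = j0 := by by_contra hij; simp [Pw, hij] at hi
    exact ⟨fun _ => j0, by rw [this], rfl, by simp [wwt, Pw, this]⟩
  | succ m ih =>
    intro i hi
    haveI : Nonempty (Fin n) := Fin.pos_iff_nonempty.mp hn
    have hne : (Finset.univ : Finset (Fin n)).Nonempty := Finset.univ_nonempty
    obtain ⟨j, _, hj⟩ := Finset.exists_mem_eq_sup Finset.univ hne
      (fun j => B i j + Pw B j0 m j)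
    have hj' : Pw B j0 (m+1) i = B i j + Pw B j0 m j := hj
    have hPm : Pw B j0 m j ≠ ⊥ := by
      intro hb; rw [hb] at hj'; simp [hj'] at hi
    obtain ⟨v', h0, hm, hw⟩ := ih j hPm
    refine ⟨fun k => Nat.casesOn k i v', rfl, hm, ?_⟩
    rw [wwt_succ_left]
    show B i (v' 0) + wwt B m v' = _
    rw [h0, hw, hj']

lemma cwt_eq_wwt {n d' : ℕ} (B : Fin n → Fin n → T) (v : ℕ → Fin n) (p : ℕ)
    (hv : v (p + (d' + 1)) = v p) :
    cwt B (fun k : Fin (d' + 1) => v (p + k.val)) = wwt B (d' + 1) (fun k => v (p + k)) := by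
  rw [wwt, ← Fin.sum_univ_eq_sum_range (fun k => B (v (p + k)) (v (p + (k + 1)))) (d' + 1), cwt]
  apply Finset.sum_congr rfl
  intro k _
  have h2 : v (p + ((k + 1 : Fin (d' + 1)) : ℕ)) = v (p + (k.val + 1)) := by
    by_cases hk : k = Fin.last d'
    · rw [hk]
      simp only [Fin.last_add_one, Fin.val_zero, Nat.add_zero, Fin.val_last]
      exact hv.symm
    · congr 1
      rw [Fin.val_add_one_of_lt (Fin.lt_last_iff_ne_last.mpr hk)]
  rw [h2]

lemma exists_repeat {n : ℕ} (hn : 0 < n) (v : ℕ → Fin n) :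
    ∃ p q, p < q ∧ q ≤ n ∧ v p = v q := by
  obtain ⟨a, b, hab, he⟩ := Fintype.exists_ne_map_eq_of_card_lt
    (fun k : Fin (n + 1) => v k.val) (by simp)
  rcases lt_or_gt_of_ne hab with hlt | hlt
  · exact ⟨a.val, b.val, hlt, by omega, he⟩
  · exact ⟨b.val, a.val, hlt, by omega, he.symm⟩

lemma walk_le_uvec {n : ℕ} (hn : 0 < n) (B : Fin n → Fin n → T) (j0 : Fin n)
    (hcyc : ∀ (ℓ : ℕ) (c : Fin (ℓ + 1) → Fin n), cwt B c ≤ 0) :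
    ∀ (m : ℕ) (v : ℕ → Fin n), v (m + 1) = j0 → wwt B (m + 1) v ≤ uvec B j0 (v 0) := by
  intro m
  induction m using Nat.strong_induction_on with
  | _ m ih =>
    intro v hv
    by_cases hmn : m + 1 ≤ n
    · exact le_trans (wwt_le_P B j0 (m + 1) v hv)
        (Finset.le_sup (f := fun m' => Pw B j0 (m' + 1) (v 0)) (Finset.mem_range.mpr (by omega)))
    · push_neg at hmn
      obtain ⟨p, q, hpq, hqn, hvpq⟩ := exists_repeat hn v
      have hqm : q ≤ m := by omega
      set d := q - p with hd
      set e := m + 1 - q with hedef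
      have hd1 : 1 ≤ d := by omega
      have he1 : 1 ≤ e := by omega
      have hq : q = p + d := by omega
      set v' : ℕ → Fin n := fun k => if k < p then v k else v (k + d) with hv'def
      have hle : ∀ k, k ≤ p → v' k = v k := by
        intro k hk
        rcases lt_or_eq_of_le hk with hk' | hk'
        · simp [hv'def, hk']
        · subst hk'; simp only [hv'def, lt_irrefl, if_neg (lt_irrefl _)]
          rw [← hq, ← hvpq]
      have hge : ∀ k, p ≤ k → v' k = v (k + d) := by
        intro k hk; simp [hv'def, Nat.not_lt.mpr hk]
      -- split original walk
      have hm1 : m + 1 = p + (d + e) := by omega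
      have split1 : wwt B (m + 1) v
          = wwt B p v + (wwt B d (fun k => v (p + k)) + wwt B e (fun k => v (p + (d + k)))) := by
        rw [hm1, wwt_add, wwt_add]
      -- split surgered walk
      have split2 : wwt B (p + e) v' = wwt B p v' + wwt B e (fun k => v' (p + k)) := wwt_add _ _ _ _
      have e1 : wwt B p v' = wwt B p v := by
        apply Finset.sum_congr rfl
        intro k hk
        have hk' : k + 1 ≤ p := Finset.mem_range.mp hk
        rw [hle k (by omega), hle (k + 1) hk']
      have e2 : wwt B e (fun k => v' (p + k)) = wwt B e (fun k => v (p + (d + k))) := by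
        apply Finset.sum_congr rfl
        intro k _
        show B (v' (p + k)) (v' (p + k + 1)) = B (v (p + (d + k))) (v (p + (d + (k + 1))))
        rw [hge (p + k) (by omega), hge (p + k + 1) (by omega),
          show p + k + d = p + (d + k) by omega, show p + k + 1 + d = p + (d + (k + 1)) by omega]
      have hC : wwt B d (fun k => v (p + k)) ≤ 0 := by
        obtain ⟨d', hd'⟩ : ∃ d'', d = d'' + 1 := ⟨d - 1, by omega⟩
        rw [hd', ← cwt_eq_wwt B v p (by rw [show p + (d' + 1) = q by omega]; exact hvpq.symm)]
        exact hcyc d' _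
      have hkey : wwt B (m + 1) v ≤ wwt B (p + e) v' := by
        rw [split1, split2, e1, e2]
        calc wwt B p v + (wwt B d (fun k => v (p + k)) + wwt B e (fun k => v (p + (d + k))))
            ≤ wwt B p v + (0 + wwt B e (fun k => v (p + (d + k)))) :=
              add_le_add_right (add_le_add_left hC _) _
          _ = wwt B p v + wwt B e (fun k => v (p + (d + k))) := by rw [zero_add]
      have hpe : p + e = (p + e - 1) + 1 := by omega
      have hlt : p + e - 1 < m := by omega
      have hv'end : v' ((p + e - 1) + 1) = j0 := by
        rw [← hpe, hge (p + e) (by omega), show p + e + d = m + 1 by omega, hv]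
      have h2 := ih (p + e - 1) hlt v' hv'end
      have hv'0 : v' 0 = v 0 := hle 0 (by omega)
      rw [hv'0] at h2
      exact le_trans hkey (by rw [hpe]; exact h2)

lemma P_le_uvec {n : ℕ} (hn : 0 < n) (B : Fin n → Fin n → T) (j0 : Fin n)
    (hcyc : ∀ (ℓ : ℕ) (c : Fin (ℓ + 1) → Fin n), cwt B c ≤ 0) (m : ℕ) (i : Fin n) :
    Pw B j0 (m + 1) i ≤ uvec B j0 i := by
  by_cases hb : Pw B j0 (m + 1) i = ⊥
  · simp [hb]
  · obtain ⟨v, h0, hm, hw⟩ := P_attained hn B j0 (m + 1) i hb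
    rw [← hw, ← h0]
    exact walk_le_uvec hn B j0 hcyc m v hm

open Fin.NatCast in
lemma zero_le_uvec {n : ℕ} (hn : 0 < n) (B : Fin n → Fin n → T)
    (hcyc : ∀ (ℓ : ℕ) (c : Fin (ℓ + 1) → Fin n), cwt B c ≤ 0)
    {ℓ0 : ℕ} (c : Fin (ℓ0 + 1) → Fin n) (hc : cwt B c = 0) :
    0 ≤ uvec B (c 0) (c 0) := by
  set v : ℕ → Fin n := fun k => c (k : Fin (ℓ0 + 1)) with hvdef
  have hv0 : v 0 = c 0 := by simp [hvdef]
  have hvL : v (ℓ0 + 1) = c 0 := by simp [hvdef]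
  have hw : wwt B (ℓ0 + 1) v = cwt B c := by
    rw [wwt, ← Fin.sum_univ_eq_sum_range (fun k => B (v k) (v (k + 1))) (ℓ0 + 1), cwt]
    apply Finset.sum_congr rfl
    intro k _
    have h1 : v k.val = c k := by simp [hvdef]
    have h2 : v (k.val + 1) = c (k + 1) := by
      simp only [hvdef]
      congr 1
      push_cast
      simp
    rw [h1, h2]
  have := walk_le_uvec hn B (c 0) hcyc ℓ0 v hvL
  rw [hw, hc, hv0] at this
  exact this

lemma P_le_uvec' {n : ℕ} (hn : 0 < n) (B : Fin n → Fin n → T) (j0 : Fin n)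
    (hcyc : ∀ (ℓ : ℕ) (c : Fin (ℓ + 1) → Fin n), cwt B c ≤ 0)
    (hu0 : 0 ≤ uvec B j0 j0) (m : ℕ) (i : Fin n) :
    Pw B j0 m i ≤ uvec B j0 i := by
  cases m with
  | zero =>
    show (if i = j0 then (0:T) else ⊥) ≤ _
    split
    · next hij => rw [hij]; exact hu0
    · exact bot_le
  | succ m => exact P_le_uvec hn B j0 hcyc m i

lemma eigen_fixed {n : ℕ} (hn : 0 < n) (B : Fin n → Fin n → T) (j0 : Fin n)
    (hcyc : ∀ (ℓ : ℕ) (c : Fin (ℓ + 1) → Fin n), cwt B c ≤ 0)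
    (hu0 : 0 ≤ uvec B j0 j0) (i : Fin n) :
    (Finset.univ.sup fun j => B i j + uvec B j0 j) = uvec B j0 i := by
  apply le_antisymm
  · apply Finset.sup_le
    intro j _
    rw [show uvec B j0 j = (Finset.range n).sup fun m => Pw B j0 (m + 1) j from rfl,
      const_add_sup]
    apply Finset.sup_le
    intro m _
    have h1 : B i j + Pw B j0 (m + 1) j ≤ Pw B j0 (m + 2) i :=
      Finset.le_sup (f := fun j => B i j + Pw B j0 (m + 1) j) (Finset.mem_univ j)
    exact le_trans h1 (P_le_uvec hn B j0 hcyc (m + 1) i)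
  · show ((Finset.range n).sup fun m => Pw B j0 (m + 1) i) ≤ _
    apply Finset.sup_le
    intro m _
    show (Finset.univ.sup fun j => B i j + Pw B j0 m j) ≤ _
    apply Finset.sup_le
    intro j _
    exact le_trans (add_le_add_right (P_le_uvec' hn B j0 hcyc hu0 m j) _)
      (Finset.le_sup (f := fun j => B i j + uvec B j0 j) (Finset.mem_univ j))

lemma coe_nsmul_T (k : ℕ) (x : ℝ) : (k • ((x : ℝ) : T)) = (((k : ℝ) * x : ℝ) : T) := by
  induction k with
  | zero => simp
  | succ k ih =>
    rw [succ_nsmul, ih, ← WithBot.coe_add, WithBot.coe_inj]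
    push_cast
    ring

lemma cwt_shift {n ℓ : ℕ} (A : Fin n → Fin n → T) (x : ℝ) (c : Fin (ℓ + 1) → Fin n) :
    cwt (fun i j => A i j + ((x : ℝ) : T)) c = cwt A c + ((((ℓ : ℝ) + 1) * x : ℝ) : T) := by
  rw [cwt, cwt, Finset.sum_add_distrib, Finset.sum_const, Finset.card_univ, Fintype.card_fin,
    coe_nsmul_T]
  push_cast
  ring_nf

theorem part1 {n : ℕ} (A : Fin n → Fin n → T) (r : ℝ) (h : RhoEq A r) :
    ∃ u : Fin n → T, u ≠ (fun _ => (⊥ : T)) ∧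
      tmulVec A u = fun i => (r : T) + u i := by
  obtain ⟨ℓ0, c0, hc0⟩ := h.1
  have hn : 0 < n := (c0 0).pos
  set B : Fin n → Fin n → T := fun i j => A i j + (((-r : ℝ) : ℝ) : T) with hB
  have hcyc : ∀ (ℓ : ℕ) (c : Fin (ℓ + 1) → Fin n), cwt B c ≤ 0 := by
    intro ℓ c
    rw [hB, cwt_shift]
    calc cwt A c + ((((ℓ : ℝ) + 1) * (-r) : ℝ) : T)
        ≤ ((((ℓ : ℝ) + 1) * r : ℝ) : T) + ((((ℓ : ℝ) + 1) * (-r) : ℝ) : T) :=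
          add_le_add_left (h.2 ℓ c) _
      _ = (0 : T) := by rw [← WithBot.coe_add]; norm_num
  have hc0B : cwt B c0 = 0 := by
    rw [hB, cwt_shift, hc0, ← WithBot.coe_add]
    norm_num
  set j0 : Fin n := c0 0 with hj0
  have hu0 : 0 ≤ uvec B j0 j0 := zero_le_uvec hn B hcyc c0 hc0B
  refine ⟨uvec B j0, ?_, ?_⟩
  · intro hbot
    have : uvec B j0 j0 = ⊥ := congrFun hbot j0
    rw [this] at hu0
    exact absurd hu0 (by simp)
  · funext i
    have hAB : ∀ j, A i j = ((r : ℝ) : T) + B i j := by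
      intro j
      rw [hB]
      show A i j = _ + (A i j + _)
      rw [add_comm ((r:ℝ) : T), add_assoc, ← WithBot.coe_add]
      norm_num
    show (Finset.univ.sup fun j => A i j + uvec B j0 j) = _
    have : (fun j => A i j + uvec B j0 j)
        = fun j => ((r : ℝ) : T) + (B i j + uvec B j0 j) := by
      funext j; rw [hAB j, add_assoc]
    rw [this, ← const_add_sup, eigen_fixed hn B j0 hcyc hu0 i]

lemma coe_sum_T {ι : Type*} (s : Finset ι) (f : ι → ℝ) :
    (∑ k ∈ s, ((f k : ℝ) : T)) = ((∑ k ∈ s, f k : ℝ) : T) := by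
  induction s using Finset.cons_induction with
  | empty => simp
  | cons i s hi ih => rw [Finset.sum_cons, Finset.sum_cons, ih, WithBot.coe_add]

theorem part2 {n : ℕ} (A : Fin n → Fin n → T) (r : ℝ) (h : RhoEq A r) :
    ∀ lam : T, ∀ u : Fin n → T, u ≠ (fun _ => (⊥ : T)) →
      (tmulVec A u = fun i => lam + u i) → lam ≤ (r : T) := by
  intro lam u hu heig
  rcases eq_or_ne lam ⊥ with hbot | hbot
  · rw [hbot]; exact bot_le
  obtain ⟨l, rfl⟩ := WithBot.ne_bot_iff_exists.mp hbot
  have hex : ∃ i0 : Fin n, u i0 ≠ ⊥ := by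
    by_contra hc; push_neg at hc; exact hu (funext fun i => hc i)
  obtain ⟨i0, hi0⟩ := hex
  have hn : 0 < n := i0.pos
  haveI : Nonempty (Fin n) := ⟨i0⟩
  have hstep : ∀ i : Fin n, u i ≠ ⊥ →
      ∃ j : Fin n, u j ≠ ⊥ ∧ ((l : ℝ) : T) + u i ≤ A i j + u j := by
    intro i hi
    have h1 : (Finset.univ.sup fun j => A i j + u j) = ((l : ℝ) : T) + u i := by
      have := congrFun heig i
      exact this
    obtain ⟨j, _, hj⟩ := Finset.exists_mem_eq_sup Finset.univ Finset.univ_nonempty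
      (fun j => A i j + u j)
    rw [h1] at hj
    have hlne : ((l : ℝ) : T) + u i ≠ ⊥ := by
      rw [Ne, WithBot.add_eq_bot]
      push_neg
      exact ⟨WithBot.coe_ne_bot, hi⟩
    have hune : u j ≠ ⊥ := by
      intro hb
      rw [hb, WithBot.add_bot] at hj
      exact hlne hj
    exact ⟨j, hune, le_of_eq hj⟩
  let S := {i : Fin n // u i ≠ ⊥}
  let g : S → S := fun s => ⟨(hstep s.1 s.2).choose, (hstep s.1 s.2).choose_spec.1⟩
  let f : ℕ → S := fun k => g^[k] ⟨i0, hi0⟩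
  let v : ℕ → Fin n := fun k => (f k).1
  have hvne : ∀ k, u (v k) ≠ ⊥ := fun k => (f k).2
  have hvstep : ∀ k, ((l : ℝ) : T) + u (v k) ≤ A (v k) (v (k + 1)) + u (v (k + 1)) := by
    intro k
    have hfk : f (k + 1) = g (f k) := Function.iterate_succ_apply' g k _
    have : v (k + 1) = (hstep (f k).1 (f k).2).choose := by
      show (f (k+1)).1 = _
      rw [hfk]
    rw [this]
    exact (hstep (f k).1 (f k).2).choose_spec.2
  have hA : ∀ k, A (v k) (v (k + 1)) ≠ ⊥ := by
    intro k hb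
    have h2 := hvstep k
    rw [hb, WithBot.bot_add] at h2
    have := le_bot_iff.mp h2
    rw [WithBot.add_eq_bot] at this
    rcases this with h3 | h3
    · exact WithBot.coe_ne_bot h3
    · exact hvne k h3
  choose x hx using fun k => WithBot.ne_bot_iff_exists.mp (hvne k)
  choose a ha using fun k => WithBot.ne_bot_iff_exists.mp (hA k)
  have hreal : ∀ k, l + x k ≤ a k + x (k + 1) := by
    intro k
    have h2 := hvstep k
    rw [← hx k, ← hx (k + 1), ← ha k, ← WithBot.coe_add, ← WithBot.coe_add] at h2
    exact WithBot.coe_le_coe.mp h2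
  obtain ⟨p, q, hpq, hqn, hvpq⟩ := exists_repeat hn v
  obtain ⟨d', hd'⟩ : ∃ d'', q - p = d'' + 1 := ⟨q - p - 1, by omega⟩
  have hq : q = p + (d' + 1) := by omega
  have hxpq : x (p + (d' + 1)) = x p := by
    have : ((x (p + (d' + 1)) : ℝ) : T) = ((x p : ℝ) : T) := by
      rw [hx, hx, ← hq, hvpq]
    exact WithBot.coe_inj.mp this
  have hsum : ((d' : ℝ) + 1) * l ≤ ∑ k ∈ Finset.range (d' + 1), a (p + k) := by
    have h1 : ∀ k ∈ Finset.range (d' + 1),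
        l ≤ a (p + k) + (x (p + (k + 1)) - x (p + k)) := by
      intro k _
      have := hreal (p + k)
      have he : p + k + 1 = p + (k + 1) := by omega
      rw [he] at this
      linarith
    calc ((d' : ℝ) + 1) * l = ∑ _k ∈ Finset.range (d' + 1), l := by
          rw [Finset.sum_const, Finset.card_range, nsmul_eq_mul]; push_cast; ring
      _ ≤ ∑ k ∈ Finset.range (d' + 1), (a (p + k) + (x (p + (k + 1)) - x (p + k))) :=
          Finset.sum_le_sum h1
      _ = (∑ k ∈ Finset.range (d' + 1), a (p + k))
          + ∑ k ∈ Finset.range (d' + 1), (x (p + (k + 1)) - x (p + k)) :=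
          Finset.sum_add_distrib
      _ = (∑ k ∈ Finset.range (d' + 1), a (p + k)) + (x (p + (d' + 1)) - x (p + 0)) := by
          rw [Finset.sum_range_sub (fun k => x (p + k))]
      _ = ∑ k ∈ Finset.range (d' + 1), a (p + k) := by
          rw [hxpq]; simp
  have hvq : v (p + (d' + 1)) = v p := by rw [← hq, ← hvpq]
  have hcwt : cwt A (fun k : Fin (d' + 1) => v (p + k.val))
      = ((∑ k ∈ Finset.range (d' + 1), a (p + k) : ℝ) : T) := by
    rw [cwt_eq_wwt A v p hvq, ← coe_sum_T]
    apply Finset.sum_congr rfl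
    intro k _
    show A (v (p + k)) (v (p + (k + 1))) = _
    rw [show p + (k + 1) = p + k + 1 by omega, ← ha (p + k)]
  have hle := h.2 d' (fun k : Fin (d' + 1) => v (p + k.val))
  rw [hcwt] at hle
  have hle' : (∑ k ∈ Finset.range (d' + 1), a (p + k)) ≤ ((d' : ℝ) + 1) * r :=
    WithBot.coe_le_coe.mp hle
  have hlr : l ≤ r := by
    have hdpos : (0 : ℝ) < (d' : ℝ) + 1 := by positivity
    nlinarith
  exact WithBot.coe_le_coe.mpr hlr

end TropAux

/-- `ρ(A)` is the maximal tropical eigenvalue of `A`: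
if `ρ(A) = r ∈ ℝ` (i.e. `ρ(A) ≠ -∞`), there is an eigenvector for `r`,
and every tropical eigenvalue `λ` satisfies `λ ≤ ρ(A)`. -/
theorem stmt1 {n : ℕ} (A : Fin n → Fin n → T) (r : ℝ) (h : RhoEq A r) :
    (∃ u : Fin n → T, u ≠ (fun _ => (⊥ : T)) ∧
      tmulVec A u = fun i => (r : T) + u i) ∧
    (∀ lam : T, ∀ u : Fin n → T, u ≠ (fun _ => (⊥ : T)) →
      (tmulVec A u = fun i => lam + u i) → lam ≤ (r : T)) :=
  ⟨TropAux.part1 A r h, TropAux.part2 A r h⟩
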